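/- For every real number x with |x| < 2, the series ∑_{k=0}^∞ x^{2k} / C(2k,k) converges and (1/4)·∑_{k=0}^∞ x^{2k}/C(2k,k) = (√(4−x²) + x·arcsin(x/2)) / ((4−x²)·√(4−x²)). -/

import Mathlib

open Real MeasureTheory intervalIntegral

lemma beta_nat (m n : ℕ) :
    ∫ t in (0:ℝ)..1, t ^ m * (1 - t) ^ n =
      (m.factorial * n.factorial : ℝ) / (m + n + 1).factorial := by
  induction n generalizing m with
  | zero =>
    have hm : (0:ℝ) < m.factorial := by positivity
    simp only [pow_zero, mul_one, integral_pow, Nat.add_zero, Nat.factorial_succ]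
    rw [eq_div_iff (by positivity)]
    push_cast
    field_simp
    simp
  | succ n ih =>
    have hm1 : ((m:ℝ)+1) ≠ 0 := by positivity
    have hu : ∀ t ∈ Set.uIcc (0:ℝ) 1, HasDerivAt (fun t : ℝ => (1 - t) ^ (n+1))
        (-( (n+1) * (1 - t) ^ n)) t := by
      intro t _
      have h := ((hasDerivAt_id t).const_sub 1).fun_pow (n+1)
      simpa [mul_comm, mul_assoc] using h
    have hv : ∀ t ∈ Set.uIcc (0:ℝ) 1, HasDerivAt (fun t : ℝ => t ^ (m+1) / (m+1))
        (t ^ m) t := by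
      intro t _
      have h := (hasDerivAt_pow (m+1) t).div_const (m+1)
      refine h.congr_deriv ?_
      push_cast
      field_simp
    have hiu : IntervalIntegrable (fun t : ℝ => -((n+1 : ℝ) * (1 - t) ^ n)) volume 0 1 := by
      apply Continuous.intervalIntegrable; continuity
    have hiv : IntervalIntegrable (fun t : ℝ => t ^ m) volume 0 1 := by
      apply Continuous.intervalIntegrable; continuity
    have key := integral_mul_deriv_eq_deriv_mul hu hv hiu hiv
    have hz : ((1:ℝ)-1)^(n+1)*((1:ℝ)^(m+1)/(m+1)) - ((1:ℝ)-0)^(n+1)*((0:ℝ)^(m+1)/(m+1)) = 0 := by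
      norm_num
    have e1 : (∫ t in (0:ℝ)..1, (1 - t) ^ (n+1) * t ^ m)
        = ((n+1 : ℝ)/(m+1)) * ∫ t in (0:ℝ)..1, t ^ (m+1) * (1 - t) ^ n := by
      rw [key, hz, zero_sub, ← intervalIntegral.integral_neg,
        ← intervalIntegral.integral_const_mul]
      congr 1; ext t; ring
    have e2 : (∫ t in (0:ℝ)..1, t ^ m * (1 - t) ^ (n+1))
        = ∫ t in (0:ℝ)..1, (1 - t) ^ (n+1) * t ^ m := by
      congr 1; ext t; ring
    rw [e2, e1, ih (m+1)]
    have hi : m + 1 + n + 1 = m + (n+1) + 1 := by omega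
    rw [hi, Nat.factorial_succ n, Nat.factorial_succ m]
    have hN : (0:ℝ) < (m + (n+1) + 1).factorial := by positivity
    push_cast
    field_simp


lemma choose_fact (k : ℕ) :
    ((2*k).choose k : ℝ) * (k.factorial * k.factorial) = (2*k).factorial := by
  have := Nat.choose_mul_factorial_mul_factorial (show k ≤ 2*k by omega)
  have h2 : 2*k - k = k := by omega
  rw [h2] at this
  exact_mod_cast by rw [← this]; push_cast; ring

lemma int_k (x : ℝ) (k : ℕ) :
    ∫ t in (0:ℝ)..1, (2*(k:ℝ)+1) * (x^2 * (t * (1-t)))^k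
      = x^(2*k) / ((2*k).choose k : ℝ) := by
  have e : ∀ t : ℝ, (2*(k:ℝ)+1) * (x^2 * (t * (1-t)))^k
      = ((2*(k:ℝ)+1) * (x^2)^k) * (t^k * (1-t)^k) := by
    intro t; rw [mul_pow, mul_pow]; ring
  simp_rw [e]
  rw [intervalIntegral.integral_const_mul, beta_nat k k]
  have hfac : ((k+k+1).factorial : ℝ) = (2*(k:ℝ)+1) * (2*k).factorial := by
    have : k+k+1 = (2*k)+1 := by omega
    rw [this, Nat.factorial_succ]; push_cast; ring
  have hc : (0:ℝ) < ((2*k).choose k : ℝ) := by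
    exact_mod_cast Nat.choose_pos (show k ≤ 2*k by omega)
  have hf : (0:ℝ) < ((2*k).factorial : ℝ) := by positivity
  rw [hfac, pow_mul, eq_div_iff hc.ne']
  have h := choose_fact k
  field_simp
  linear_combination ((x^2)^k) * h

lemma hasSum_odd_geom {u : ℝ} (hu : |u| < 1) :
    HasSum (fun k : ℕ => (2*(k:ℝ)+1) * u^k) ((1+u)/(1-u)^2) := by
  have hu' : ‖u‖ < 1 := by simpa using hu
  have h1 := hasSum_coe_mul_geometric_of_norm_lt_one hu'
  have h2 := hasSum_geometric_of_norm_lt_one hu'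
  have h := (h1.mul_left 2).add h2
  have hne : (1:ℝ) - u ≠ 0 := by
    intro h0
    have : u = 1 := by linarith
    rw [this] at hu; norm_num at hu
  convert h using 1
  · rfl
  · ext k; push_cast; ring
  · field_simp
    ring

lemma alg_deriv (x r t Q : ℝ) (hx : x ≠ 0) (hr : r ≠ 0) (hQ : Q ≠ 0)
    (hr2 : r^2 = 4 - x^2) (hQdef : Q = x^2*t^2 - x^2*t + 1) :
    (1 + x^2*(t*(1-t))) / (1 - x^2*(t*(1-t)))^2 =
    (4*x^2 * (x^2*r^2*Q) - (4*x^2*t - 2*x^2) * (x^2*r^2*(2*x^2*t - x^2))) / (x^2*r^2*Q)^2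
      + 2*x/r^3 * (1/(1 + ((2*x*t - x)/r)^2) * (2*x/r)) := by
  have hnum : 4*x^2*(x^2*r^2*Q) - (4*x^2*t - 2*x^2)*(x^2*r^2*(2*x^2*t - x^2))
      = x^4*r^2*(2*r^2 - 4*Q) := by
    rw [hQdef]; linear_combination (-2*(x:ℝ)^4*r^2) * hr2
  have harg : 1 + ((2*x*t - x)/r)^2 = 4*Q/r^2 := by
    rw [hQdef]; field_simp; linear_combination hr2
  have eA : (4*x^2 * (x^2*r^2*Q) - (4*x^2*t - 2*x^2) * (x^2*r^2*(2*x^2*t - x^2)))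
      / (x^2*r^2*Q)^2 = 2/Q^2 - 4/(r^2*Q) := by
    rw [hnum]; field_simp
  have eB : 2*x/r^3 * (1/(1 + ((2*x*t - x)/r)^2) * (2*x/r)) = x^2/(r^2*Q) := by
    rw [harg]; field_simp; ring
  rw [eA, eB]
  have h1t : 1 - x^2*(t*(1-t)) = Q := by rw [hQdef]; ring
  have h1t' : 1 + x^2*(t*(1-t)) = 2 - Q := by rw [hQdef]; ring
  rw [h1t, h1t']
  field_simp
  linear_combination (-Q) * hr2

lemma integral_eval (x : ℝ) (hx0 : 0 < x) (hx2 : x < 2) :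
    ∫ t in (0:ℝ)..1, (1 + x^2*(t*(1-t))) / (1 - x^2*(t*(1-t)))^2
      = 4/(4-x^2) + 4*x*Real.arcsin (x/2)/((4-x^2)*Real.sqrt (4-x^2)) := by
  have hx4 : x^2 < 4 := by nlinarith
  have h4 : (0:ℝ) < 4 - x^2 := by linarith
  set r := Real.sqrt (4 - x^2) with hrdef
  have hr0 : 0 < r := Real.sqrt_pos.mpr h4
  have hr2 : r^2 = 4 - x^2 := Real.sq_sqrt h4.le
  have hq : ∀ t : ℝ, 0 < x^2*t^2 - x^2*t + 1 := by
    intro t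
    nlinarith [mul_nonneg (sq_nonneg x) (sq_nonneg (2*t-1))]
  set F : ℝ → ℝ := fun t =>
    (4*x^2*t - 2*x^2)/((x^2*r^2) * (x^2*t^2 - x^2*t + 1))
      + (2*x/r^3) * Real.arctan ((2*x*t - x)/r) with hF
  have hderiv : ∀ t ∈ Set.uIcc (0:ℝ) 1,
      HasDerivAt F ((1 + x^2*(t*(1-t))) / (1 - x^2*(t*(1-t)))^2) t := by
    intro t _
    have hQ := hq t
    have h1 : HasDerivAt (fun t : ℝ => 4*x^2*t - 2*x^2) (4*x^2) t := by
      simpa using ((hasDerivAt_id t).const_mul (4*x^2)).sub_const (2*x^2)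
    have h2 : HasDerivAt (fun t : ℝ => (x^2*r^2) * (x^2*t^2 - x^2*t + 1))
        ((x^2*r^2) * (2*x^2*t - x^2)) t := by
      have hpoly : HasDerivAt (fun t : ℝ => x^2*t^2 - x^2*t + 1) (2*x^2*t - x^2) t := by
        have := (((hasDerivAt_pow 2 t).const_mul (x^2)).sub
          ((hasDerivAt_id t).const_mul (x^2))).add_const 1
        refine this.congr_deriv ?_
        push_cast; ring
      simpa [mul_comm, mul_assoc] using hpoly.const_mul (x^2*r^2)
    have hne : (x^2*r^2) * (x^2*t^2 - x^2*t + 1) ≠ 0 := by positivity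
    have hdiv := h1.div h2 hne
    have h3 : HasDerivAt (fun t : ℝ => (2*x*t - x)/r) (2*x/r) t := by
      have := (((hasDerivAt_id t).const_mul (2*x)).sub_const x).div_const r
      simpa [mul_comm, mul_div_assoc] using this
    have h4' := h3.arctan
    have htot := hdiv.add (h4'.const_mul (2*x/r^3))
    refine htot.congr_deriv ?_
    exact (alg_deriv x r t _ (ne_of_gt hx0) (ne_of_gt hr0) (ne_of_gt hQ) hr2 rfl).symm
  have hint : IntervalIntegrable
      (fun t : ℝ => (1 + x^2*(t*(1-t))) / (1 - x^2*(t*(1-t)))^2) volume 0 1 := by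
    apply Continuous.intervalIntegrable
    apply Continuous.div (by continuity) (by continuity)
    intro t
    have := hq t
    have h1t : 1 - x^2*(t*(1-t)) = x^2*t^2 - x^2*t + 1 := by ring
    rw [h1t]
    positivity
  have key := intervalIntegral.integral_eq_sub_of_hasDerivAt hderiv hint
  rw [key]
  have harcsin : Real.arctan (x/r) = Real.arcsin (x/2) := by
    have hmem : x/2 ∈ Set.Ioo (-(1:ℝ)) 1 := by
      constructor <;> [nlinarith; nlinarith]
    rw [Real.arcsin_eq_arctan hmem]
    congr 1
    have hs : Real.sqrt (1 - (x/2)^2) = r/2 := by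
      rw [show (1:ℝ) - (x/2)^2 = (r/2)^2 by linear_combination (-1/4 : ℝ) * hr2]
      exact Real.sqrt_sq (by positivity)
    rw [hs]
    field_simp
  have hF1 : F 1 = 2/r^2 + (2*x/r^3) * Real.arctan (x/r) := by
    rw [hF]
    have hx0' : x ≠ 0 := ne_of_gt hx0
    have hr0' : r ≠ 0 := ne_of_gt hr0
    norm_num
    field_simp
    ring
  have hF0 : F 0 = -(2/r^2) - (2*x/r^3) * Real.arctan (x/r) := by
    rw [hF]
    norm_num
    rw [show (-x/r : ℝ) = -(x/r) by ring, Real.arctan_neg]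
    field_simp
    ring
  rw [hF1, hF0, harcsin]
  rw [show (4:ℝ) - x^2 = r^2 by rw [hr2]]
  field_simp
  ring


lemma summable_main (x : ℝ) (hx : |x| < 2) :
    Summable (fun k : ℕ => x ^ (2 * k) / (Nat.choose (2 * k) k : ℝ)) := by
  have hx4 : x^2 < 4 := by nlinarith [abs_nonneg x, sq_abs x, abs_lt.mp hx]
  have hr : |x^2/4| < 1 := by
    rw [abs_div, abs_of_nonneg (sq_nonneg x)]
    rw [abs_of_pos (by norm_num : (0:ℝ) < 4)]
    rw [div_lt_one (by norm_num : (0:ℝ) < 4)]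
    exact hx4
  have hgeom : Summable (fun k : ℕ => (2*(k:ℝ)+1) * (x^2/4)^k) :=
    (hasSum_odd_geom hr).summable
  apply Summable.of_nonneg_of_le _ _ hgeom
  · intro k
    have hC : (0:ℝ) < ((2*k).choose k : ℝ) :=
      by exact_mod_cast Nat.choose_pos (show k ≤ 2*k by omega)
    rw [pow_mul]
    positivity
  · intro k
    have hC : (0:ℝ) < ((2*k).choose k : ℝ) :=
      by exact_mod_cast Nat.choose_pos (show k ≤ 2*k by omega)
    have h4 : (4:ℝ)^k ≤ (2*(k:ℝ)+1) * ((2*k).choose k : ℝ) := by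
      have := Nat.four_pow_le_two_mul_add_one_mul_central_binom k
      exact_mod_cast this
    have h4k : (0:ℝ) < 4^k := by positivity
    rw [pow_mul, div_le_iff₀ hC, div_pow,
      show (2*(k:ℝ)+1) * ((x^2)^k/4^k) * ((2*k).choose k : ℝ)
        = ((2*(k:ℝ)+1) * ((2*k).choose k : ℝ)) * (x^2)^k / 4^k by ring,
      le_div_iff₀ h4k]
    have := mul_le_mul_of_nonneg_left h4 (pow_nonneg (sq_nonneg x) k)
    nlinarith [this]

lemma tsum_eq_main (x : ℝ) (hx0 : 0 < x) (hx2 : x < 2) :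
    ∑' k : ℕ, x ^ (2*k) / ((2*k).choose k : ℝ)
      = 4/(4-x^2) + 4*x*Real.arcsin (x/2)/((4-x^2)*Real.sqrt (4-x^2)) := by
  have hx : |x| < 2 := by rw [abs_of_pos hx0]; exact hx2
  have hx4 : x^2 < 4 := by nlinarith
  set μ := volume.restrict (Set.Ioc (0:ℝ) 1) with hμ
  set F : ℕ → ℝ → ℝ := fun k t => (2*(k:ℝ)+1) * (x^2*(t*(1-t)))^k with hFdef
  have hcont : ∀ k, Continuous (F k) := by intro k; rw [hFdef]; continuity
  have hFint : ∀ k, Integrable (F k) μ := fun k => (hcont k).integrableOn_Ioc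
  have hIoc : ∀ k, ∫ t in Set.Ioc (0:ℝ) 1, F k t = x^(2*k) / ((2*k).choose k : ℝ) := by
    intro k
    rw [← intervalIntegral.integral_of_le zero_le_one]
    exact int_k x k
  have hnonneg : ∀ k, ∀ t ∈ Set.Ioc (0:ℝ) 1, 0 ≤ F k t := by
    intro k t ht
    have h1 : (0:ℝ) ≤ t := ht.1.le
    have h2 : (0:ℝ) ≤ 1 - t := by linarith [ht.2]
    have : (0:ℝ) ≤ x^2*(t*(1-t)) := by positivity
    rw [hFdef]
    positivity
  have hnorm : ∀ k, (∫ t in Set.Ioc (0:ℝ) 1, ‖F k t‖) = x^(2*k) / ((2*k).choose k : ℝ) := by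
    intro k
    rw [← hIoc k]
    apply setIntegral_congr_fun measurableSet_Ioc
    intro t ht
    exact Real.norm_of_nonneg (hnonneg k t ht)
  have hsumnorm : Summable fun k => ∫ t, ‖F k t‖ ∂μ := by
    have : (fun k => ∫ t, ‖F k t‖ ∂μ) = fun k => x^(2*k) / ((2*k).choose k : ℝ) := by
      funext k; exact hnorm k
    rw [this]
    exact summable_main x hx
  have hswap := MeasureTheory.integral_tsum_of_summable_integral_norm hFint hsumnorm
  have hsum_eq : (∑' k : ℕ, x ^ (2*k) / ((2*k).choose k : ℝ)) = ∑' k, ∫ t, F k t ∂μ := by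
    congr 1; funext k; rw [hμ]; exact (hIoc k).symm
  rw [hsum_eq, hswap]
  have hpt : ∫ t, (∑' k, F k t) ∂μ
      = ∫ t in Set.Ioc (0:ℝ) 1, (1 + x^2*(t*(1-t))) / (1 - x^2*(t*(1-t)))^2 := by
    apply setIntegral_congr_fun measurableSet_Ioc
    intro t ht
    have h1 : (0:ℝ) ≤ t := ht.1.le
    have h2 : (0:ℝ) ≤ 1 - t := by linarith [ht.2]
    have hu0 : (0:ℝ) ≤ x^2*(t*(1-t)) := by positivity
    have hu1 : x^2*(t*(1-t)) < 1 := by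
      have htq : t*(1-t) ≤ 1/4 := by nlinarith [sq_nonneg (2*t-1)]
      nlinarith [sq_nonneg x]
    have hu : |x^2*(t*(1-t))| < 1 := by rw [abs_of_nonneg hu0]; exact hu1
    exact (hasSum_odd_geom hu).tsum_eq
  rw [hpt, ← intervalIntegral.integral_of_le zero_le_one]
  exact integral_eval x hx0 hx2

theorem stmt_0 (x : ℝ) (hx : |x| < 2) :
    Summable (fun k : ℕ => x ^ (2 * k) / (Nat.choose (2 * k) k : ℝ)) ∧
    (1 / 4) * ∑' k : ℕ, x ^ (2 * k) / (Nat.choose (2 * k) k : ℝ) =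
      (Real.sqrt (4 - x ^ 2) + x * Real.arcsin (x / 2)) /
        ((4 - x ^ 2) * Real.sqrt (4 - x ^ 2)) := by
  refine ⟨summable_main x hx, ?_⟩
  rcases eq_or_ne x 0 with rfl | hx0
  · have h1 : (∑' k : ℕ, (0:ℝ) ^ (2 * k) / (Nat.choose (2 * k) k : ℝ)) = 1 := by
      rw [tsum_eq_single 0]
      · norm_num
      · intro k hk
        rw [zero_pow (by omega : 2*k ≠ 0), zero_div]
    rw [h1]
    have h2 : Real.sqrt 4 = 2 := by
      rw [show (4:ℝ) = 2^2 by norm_num, Real.sqrt_sq (by norm_num : (0:ℝ) ≤ 2)]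
    norm_num [h2]
  · have hy0 : 0 < |x| := abs_pos.mpr hx0
    have hkey := tsum_eq_main |x| hy0 hx
    have hts : (fun k : ℕ => x ^ (2 * k) / (Nat.choose (2 * k) k : ℝ))
        = fun k : ℕ => |x| ^ (2 * k) / (Nat.choose (2 * k) k : ℝ) := by
      funext k
      rw [pow_mul, pow_mul, sq_abs]
    have hsq : |x|^2 = x^2 := sq_abs x
    have harc : |x| * Real.arcsin (|x|/2) = x * Real.arcsin (x/2) := by
      rcases abs_cases x with ⟨h, _⟩ | ⟨h, _⟩
      · rw [h]
      · rw [h, show (-x/2 : ℝ) = -(x/2) by ring, Real.arcsin_neg]; ring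
    rw [hts, hkey, hsq]
    rw [show (4:ℝ) * |x| * Real.arcsin (|x| / 2) = 4 * (|x| * Real.arcsin (|x| / 2)) by ring, harc]
    have hx4 : x^2 < 4 := by nlinarith [abs_lt.mp hx, abs_nonneg x, sq_abs x]
    have h4 : (0:ℝ) < 4 - x^2 := by linarith
    have hr0 : 0 < Real.sqrt (4 - x^2) := Real.sqrt_pos.mpr h4
    have hr0' : Real.sqrt (4 - x^2) ≠ 0 := ne_of_gt hr0
    have h4' : (4:ℝ) - x^2 ≠ 0 := ne_of_gt h4
    field_simp
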